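/- Let P and Q be positive joint distributions on 𝒳 × 𝒴 and let 0 ≤ r ≤ E(Q‖P). Then min{ D(Q̄‖Q) : Q̄ a joint distribution on 𝒳 × 𝒴 with E(Q̄‖P) ≤ r } = min{ E(P̄‖Q) : P̄ a joint distribution on 𝒳 × 𝒴 with D(P̄‖P) ≤ r }. -/
import Mathlib


open scoped Classical BigOperators

noncomputable section

variable {X Y : Type*} [Fintype X] [Fintype Y]

/-- `P` is a joint distribution on `X × Y`. -/
def IsDist (P : X × Y → ℝ) : Prop :=
  (∀ z, 0 ≤ P z) ∧ ∑ z : X × Y, P z = 1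

/-- `P` is a positive joint distribution on `X × Y`. -/
def IsPos (P : X × Y → ℝ) : Prop :=
  (∀ z, 0 < P z) ∧ ∑ z : X × Y, P z = 1

/-- The first marginal of a joint distribution. -/
def margX (P : X × Y → ℝ) (x : X) : ℝ := ∑ y : Y, P (x, y)

/-- The second marginal of a joint distribution. -/
def margY (P : X × Y → ℝ) (y : Y) : ℝ := ∑ x : X, P (x, y)

/-- Relative entropy `D(P‖Q)` (natural log; `Real.log 0 = 0` realizes `0·log 0 = 0`). -/
def relEnt (P Q : X × Y → ℝ) : ℝ := ∑ z : X × Y, P z * Real.log (P z / Q z)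

/-- Projected relative entropy `E(P‖Q)`. -/
def projE (P Q : X × Y → ℝ) : ℝ :=
  sInf { d : ℝ | ∃ P' : X × Y → ℝ,
    IsDist P' ∧ margX P' = margX P ∧ margY P' = margY P ∧ d = relEnt P' Q }

/-- `R ∈ ℰ^{xy}(S)` : `R` has the same correlation coordinates as `S`. -/
def SameCorr (R S : X × Y → ℝ) : Prop :=
  ∃ a1 : X → ℝ, ∃ a2 : Y → ℝ,
    ∀ x : X, ∀ y : Y, Real.log (R (x, y) / S (x, y)) = a1 x + a2 y

/-- The type (empirical distribution) of a sequence. -/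
def empDist {n : ℕ} (x : Fin n → X) (a : X) : ℝ :=
  ((Finset.univ.filter fun i => x i = a).card : ℝ) / n

/-- The joint type of a pair of sequences. -/
def empJoint {n : ℕ} (x : Fin n → X) (y : Fin n → Y) (z : X × Y) : ℝ :=
  ((Finset.univ.filter fun i => x i = z.1 ∧ y i = z.2).card : ℝ) / n

/-- Probability of a set under the `n`-fold i.i.d. product of `P`. -/
def prodProb (P : X × Y → ℝ) (n : ℕ) (A : Set ((Fin n → X) × (Fin n → Y))) : ℝ :=
  ∑ z : (Fin n → X) × (Fin n → Y),
    if z ∈ A then ∏ i : Fin n, P (z.1 i, z.2 i) else 0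

/-- `P` is a joint type with denominator `n` (an element of `𝒫ₙ(𝒳 × 𝒴)`). -/
def IsTypeN (n : ℕ) (P : X × Y → ℝ) : Prop :=
  IsDist P ∧ ∀ z : X × Y, ∃ k : ℕ, P z = (k : ℝ) / n

/-- `Eₙ(P̄‖Q)` : projected relative entropy restricted to joint types. -/
def En (n : ℕ) (Pbar Q : X × Y → ℝ) : ℝ :=
  sInf { d : ℝ | ∃ Pt : X × Y → ℝ,
    IsTypeN n Pt ∧ margX Pt = margX Pbar ∧ margY Pt = margY Pbar ∧ d = relEnt Pt Q }

/-- Standard normal cumulative distribution function `Φ`. -/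
def stdNormalCDF (t : ℝ) : ℝ :=
  ∫ u in Set.Iic t, (Real.sqrt (2 * Real.pi))⁻¹ * Real.exp (-(u ^ 2) / 2)

/-- Inverse of the standard normal CDF, `Φ⁻¹`. -/
def stdNormalCDFInv (e : ℝ) : ℝ := Function.invFun stdNormalCDF e

-- Gibbs: nonnegativity of relative entropy
lemma relEnt_nonneg (P Q : X × Y → ℝ) (hP : IsDist P) (hQ : IsPos Q) :
    0 ≤ relEnt P Q := by
  have key : ∀ z : X × Y, P z - Q z ≤ P z * Real.log (P z / Q z) := by
    intro z
    rcases eq_or_lt_of_le (hP.1 z) with h0 | hpos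
    · simp [← h0]
      exact (hQ.1 z).le
    · have hq := hQ.1 z
      have hdiv : 0 < P z / Q z := div_pos hpos hq
      have := Real.one_sub_inv_le_log_of_pos hdiv
      have h2 : P z * (1 - (P z / Q z)⁻¹) ≤ P z * Real.log (P z / Q z) :=
        mul_le_mul_of_nonneg_left this hpos.le
      calc P z - Q z = P z * (1 - (P z / Q z)⁻¹) := by
            field_simp
          _ ≤ _ := h2
  calc (0:ℝ) = ∑ z : X × Y, (P z - Q z) := by
        rw [Finset.sum_sub_distrib, hP.2, hQ.2]; ring
    _ ≤ relEnt P Q := Finset.sum_le_sum fun z _ => key z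

lemma relEnt_self (P : X × Y → ℝ) : relEnt P P = 0 := by
  unfold relEnt
  apply Finset.sum_eq_zero
  intro z _
  rcases eq_or_ne (P z) 0 with h | h
  · simp [h]
  · rw [div_self h]; simp

lemma projE_bddBelow (P Q : X × Y → ℝ) (hQ : IsPos Q) :
    BddBelow { d : ℝ | ∃ P' : X × Y → ℝ,
      IsDist P' ∧ margX P' = margX P ∧ margY P' = margY P ∧ d = relEnt P' Q } := by
  refine ⟨0, ?_⟩
  rintro d ⟨P', hP', _, _, rfl⟩
  exact relEnt_nonneg P' Q hP' hQ

lemma projE_set_nonempty (P Q : X × Y → ℝ) (hP : IsDist P) :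
    ∃ d, d ∈ { d : ℝ | ∃ P' : X × Y → ℝ,
      IsDist P' ∧ margX P' = margX P ∧ margY P' = margY P ∧ d = relEnt P' Q } :=
  ⟨relEnt P Q, P, hP, rfl, rfl, rfl⟩

lemma projE_le_relEnt (P Q : X × Y → ℝ) (hP : IsDist P) (hQ : IsPos Q) :
    projE P Q ≤ relEnt P Q :=
  csInf_le (projE_bddBelow P Q hQ) ⟨P, hP, rfl, rfl, rfl⟩

lemma projE_nonneg (P Q : X × Y → ℝ) (hP : IsDist P) (hQ : IsPos Q) :
    0 ≤ projE P Q :=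
  le_csInf (projE_set_nonempty P Q hP) (by rintro d ⟨P', hP', _, _, rfl⟩; exact relEnt_nonneg P' Q hP' hQ)

-- projE depends only on the marginals
lemma projE_congr (A B Q : X × Y → ℝ) (hX : margX A = margX B) (hY : margY A = margY B) :
    projE A Q = projE B Q := by
  unfold projE
  congr 1
  ext d
  constructor
  · rintro ⟨P', h1, h2, h3, h4⟩; exact ⟨P', h1, h2.trans hX, h3.trans hY, h4⟩
  · rintro ⟨P', h1, h2, h3, h4⟩; exact ⟨P', h1, h2.trans hX.symm, h3.trans hY.symm, h4⟩

-- relEnt P' Q as a continuous function of P' (Q positive)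
lemma relEnt_continuous (Q : X × Y → ℝ) (hQ : ∀ z, 0 < Q z) :
    Continuous fun P' : X × Y → ℝ => relEnt P' Q := by
  have heq : ∀ P' : X × Y → ℝ, relEnt P' Q
      = ∑ z : X × Y, (P' z * Real.log (P' z) - P' z * Real.log (Q z)) := by
    intro P'
    unfold relEnt
    apply Finset.sum_congr rfl
    intro z _
    rcases eq_or_ne (P' z) 0 with h | h
    · simp [h]
    · rw [Real.log_div h (hQ z).ne', mul_sub]
  simp only [heq]
  apply continuous_finset_sum
  intro z _
  exact (Real.continuous_mul_log.comp (continuous_apply z)).sub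
    ((continuous_apply z).mul continuous_const)

-- attainment of projE
lemma projE_attained (Qbar P : X × Y → ℝ) (hQbar : IsDist Qbar) (hP : IsPos P) :
    ∃ Pbar : X × Y → ℝ, IsDist Pbar ∧ margX Pbar = margX Qbar ∧ margY Pbar = margY Qbar ∧
      relEnt Pbar P = projE Qbar P := by
  set K : Set (X × Y → ℝ) :=
    {P' | IsDist P' ∧ margX P' = margX Qbar ∧ margY P' = margY Qbar} with hK
  have hKne : K.Nonempty := ⟨Qbar, hQbar, rfl, rfl⟩
  have hsub : K ⊆ Set.univ.pi fun _ : X × Y => Set.Icc (0:ℝ) 1 := by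
    rintro P' ⟨⟨hpos, hsum⟩, -, -⟩ z _
    refine ⟨hpos z, ?_⟩
    calc P' z ≤ ∑ w : X × Y, P' w :=
          Finset.single_le_sum (fun w _ => hpos w) (Finset.mem_univ z)
      _ = 1 := hsum
  have hclosed : IsClosed K := by
    have h1 : IsClosed {P' : X × Y → ℝ | ∀ z, 0 ≤ P' z} := by
      have : {P' : X × Y → ℝ | ∀ z, 0 ≤ P' z} = ⋂ z, {P' | 0 ≤ P' z} := by
        ext; simp
      rw [this]
      exact isClosed_iInter fun z => isClosed_le continuous_const (continuous_apply z)
    have h2 : IsClosed {P' : X × Y → ℝ | ∑ z : X × Y, P' z = 1} :=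
      isClosed_eq (continuous_finset_sum _ fun z _ => continuous_apply z) continuous_const
    have h3 : IsClosed {P' : X × Y → ℝ | margX P' = margX Qbar} := by
      have : {P' : X × Y → ℝ | margX P' = margX Qbar}
          = ⋂ x, {P' | margX P' x = margX Qbar x} := by
        ext P'; simp [funext_iff]
      rw [this]
      exact isClosed_iInter fun x => isClosed_eq
        (continuous_finset_sum _ fun y _ => continuous_apply (x, y)) continuous_const
    have h4 : IsClosed {P' : X × Y → ℝ | margY P' = margY Qbar} := by
      have : {P' : X × Y → ℝ | margY P' = margY Qbar}
          = ⋂ y, {P' | margY P' y = margY Qbar y} := by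
        ext P'; simp [funext_iff]
      rw [this]
      exact isClosed_iInter fun y => isClosed_eq
        (continuous_finset_sum _ fun x _ => continuous_apply (x, y)) continuous_const
    have : K = ({P' : X × Y → ℝ | ∀ z, 0 ≤ P' z} ∩ {P' | ∑ z : X × Y, P' z = 1})
        ∩ ({P' : X × Y → ℝ | margX P' = margX Qbar} ∩ {P' | margY P' = margY Qbar}) := by
      ext P'
      simp only [hK, Set.mem_setOf_eq, Set.mem_inter_iff, IsDist, and_assoc]
    rw [this]
    exact ((h1.inter h2).inter (h3.inter h4))
  have hKcomp : IsCompact K :=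
    IsCompact.of_isClosed_subset (isCompact_univ_pi fun _ => isCompact_Icc) hclosed hsub
  obtain ⟨Pbar, hPbarK, hmin⟩ := hKcomp.exists_isMinOn hKne
    ((relEnt_continuous P hP.1).continuousOn)
  obtain ⟨hPbarDist, hmX, hmY⟩ := hPbarK
  refine ⟨Pbar, hPbarDist, hmX, hmY, le_antisymm ?_ ?_⟩
  · apply le_csInf (projE_set_nonempty Qbar P hQbar)
    rintro d ⟨P', h1, h2, h3, rfl⟩
    exact hmin ⟨h1, h2, h3⟩
  · exact csInf_le (projE_bddBelow Qbar P hP) ⟨Pbar, hPbarDist, hmX, hmY, rfl⟩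

/-- the two expressions for the exponent function coincide. -/
theorem exponent_two_expressions_coincide
    [Nonempty X] [Nonempty Y]
    (P Q : X × Y → ℝ) (hP : IsPos P) (hQ : IsPos Q)
    (r : ℝ) (hr0 : 0 ≤ r) (hr1 : r ≤ projE Q P) :
    sInf { d : ℝ | ∃ Qbar : X × Y → ℝ, IsDist Qbar ∧ projE Qbar P ≤ r ∧ d = relEnt Qbar Q }
      = sInf { d : ℝ | ∃ Pbar : X × Y → ℝ, IsDist Pbar ∧ relEnt Pbar P ≤ r ∧ d = projE Pbar Q } := by
  have hPd : IsDist P := ⟨fun z => (hP.1 z).le, hP.2⟩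
  have hLbdd : BddBelow { d : ℝ | ∃ Qbar : X × Y → ℝ,
      IsDist Qbar ∧ projE Qbar P ≤ r ∧ d = relEnt Qbar Q } := by
    refine ⟨0, ?_⟩
    rintro d ⟨Qbar, h1, -, rfl⟩
    exact relEnt_nonneg Qbar Q h1 hQ
  have hRbdd : BddBelow { d : ℝ | ∃ Pbar : X × Y → ℝ,
      IsDist Pbar ∧ relEnt Pbar P ≤ r ∧ d = projE Pbar Q } := by
    refine ⟨0, ?_⟩
    rintro d ⟨Pbar, h1, -, rfl⟩
    exact projE_nonneg Pbar Q h1 hQ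
  have hLne : ∃ d, d ∈ { d : ℝ | ∃ Qbar : X × Y → ℝ,
      IsDist Qbar ∧ projE Qbar P ≤ r ∧ d = relEnt Qbar Q } :=
    ⟨relEnt P Q, P, hPd, by
      calc projE P P ≤ relEnt P P := projE_le_relEnt P P hPd hP
        _ = 0 := relEnt_self P
        _ ≤ r := hr0, rfl⟩
  have hRne : ∃ d, d ∈ { d : ℝ | ∃ Pbar : X × Y → ℝ,
      IsDist Pbar ∧ relEnt Pbar P ≤ r ∧ d = projE Pbar Q } :=
    ⟨projE P Q, P, hPd, by rw [relEnt_self]; exact hr0, rfl⟩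
  apply le_antisymm
  · -- LHS ≤ RHS
    apply le_csInf hRne
    rintro d ⟨Pbar, hPbar, hD, rfl⟩
    -- show sInf LHS ≤ projE Pbar Q = sInf S'
    apply le_csInf (projE_set_nonempty Pbar Q hPbar)
    rintro d' ⟨P', h1, h2, h3, rfl⟩
    apply csInf_le hLbdd
    refine ⟨P', h1, ?_, rfl⟩
    calc projE P' P ≤ relEnt Pbar P :=
          csInf_le (projE_bddBelow P' P hP) ⟨Pbar, hPbar, h2.symm, h3.symm, rfl⟩
      _ ≤ r := hD
  · -- RHS ≤ LHS
    apply le_csInf hLne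
    rintro d ⟨Qbar, hQbar, hE, rfl⟩
    obtain ⟨Pbar, hPbar, hmX, hmY, hEq⟩ := projE_attained Qbar P hQbar hP
    calc sInf { d : ℝ | ∃ Pbar : X × Y → ℝ, IsDist Pbar ∧ relEnt Pbar P ≤ r ∧ d = projE Pbar Q }
        ≤ projE Pbar Q := csInf_le hRbdd ⟨Pbar, hPbar, hEq.le.trans hE, rfl⟩
      _ = projE Qbar Q := projE_congr Pbar Qbar Q hmX hmY
      _ ≤ relEnt Qbar Q := projE_le_relEnt Qbar Q hQbar hQ
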